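/- arXiv:1702.08664 — 3 statements merged into one kernel-verified Lean document; each statement's English description precedes it below -/
import Mathlib

section
/- Every normal triangular set N = [N_1,...,N_r] in K[x_1,...,x_n] has the projection property: for each i = 0,...,r−1, every common zero (in the algebraic closure of K) of [N_1,...,N_i] that avoids the zeros of all initials of N extends to a zero of the whole set N avoiding the zeros of all initials of N. -/
open MvPolynomial

namespace CharDec

variable {K : Type*} [Field K] {σ : Type*} [LinearOrder σ]

/-- Lexicographic comparison of exponent vectors (larger variables dominate):
`a ≤ b` iff `a = b` or at the greatest index where they differ, `a` is smaller. -/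
def lexLe (a b : σ →₀ ℕ) : Prop :=
  a = b ∨ ∃ i : σ, a i < b i ∧ ∀ j : σ, i < j → a j = b j

/-- `m` is the leading monomial of `f` with respect to the lex term ordering. -/
def IsLeadMon (f : MvPolynomial σ K) (m : σ →₀ ℕ) : Prop :=
  m ∈ f.support ∧ ∀ m' ∈ f.support, lexLe m' m

/-- `f` has leading (greatest actually occurring) variable `i`. -/
def HasLV (f : MvPolynomial σ K) (i : σ) : Prop :=
  i ∈ f.vars ∧ ∀ j ∈ f.vars, j ≤ i

/-- The coefficient of `(X i) ^ d` in `f`, as a polynomial in the remaining variables. -/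
noncomputable def coeffWrt (i : σ) (d : ℕ) (f : MvPolynomial σ K) :
    MvPolynomial σ K :=
  ∑ m ∈ f.support.filter (fun m => m i = d), monomial (m.update i 0) (f.coeff m)

/-- The initial (leading coefficient in the leading variable) of `f` with
respect to the variable `i`. -/
noncomputable def initialWrt (i : σ) (f : MvPolynomial σ K) : MvPolynomial σ K :=
  coeffWrt i (f.degreeOf i) f

/-- `R` is the pseudo-remainder of `P` on pseudo-division by `Q` with respect
to the variable `y` (classical pseudo-division, with the exponent
`deg P - deg Q + 1` when `deg P ≥ deg Q`, and `0` otherwise). -/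
def IsPrem (y : σ) (Q P R : MvPolynomial σ K) : Prop :=
  ∃ A : MvPolynomial σ K,
    (initialWrt y Q) ^ (P.degreeOf y + 1 - Q.degreeOf y) * P = A * Q + R ∧
    R.degreeOf y < Q.degreeOf y

/-- `IterPrem P L R` : `R` is the iterated pseudo-remainder of `P` by the
list `L` of pairs (leading variable, divisor), divisors being used from the
head of the list on. -/
def IterPrem : MvPolynomial σ K → List (σ × MvPolynomial σ K) →
    MvPolynomial σ K → Prop
  | P, [], R => R = P
  | P, e :: L, R => ∃ S, IsPrem e.1 e.2 P S ∧ IterPrem S L R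

/-- A triangular set: a list of (leading variable, polynomial) pairs with
strictly increasing leading variables. -/
structure TriSet (K : Type*) [Field K] (σ : Type*) [LinearOrder σ] where
  elems : List (σ × MvPolynomial σ K)
  sorted : elems.Pairwise (fun e e' => e.1 < e'.1)
  hlv : ∀ e ∈ elems, HasLV e.2 e.1

namespace TriSet

/-- The list of leading variables of a triangular set. -/
def lvs (T : TriSet K σ) : List σ := T.elems.map Prod.fst

/-- The list of polynomials of a triangular set. -/
def polys (T : TriSet K σ) : List (MvPolynomial σ K) := T.elems.map Prod.snd

/-- A variable is a parameter of `T` if it is not a leading variable of `T`. -/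
def IsParam (T : TriSet K σ) (j : σ) : Prop := j ∉ T.lvs

/-- `T` is normal: every initial involves only the parameters of `T`. -/
def Normal (T : TriSet K σ) : Prop :=
  ∀ e ∈ T.elems, ∀ j ∈ (initialWrt e.1 e.2).vars, T.IsParam j

/-- `T` is zero-dimensional: every variable is a leading variable of `T`. -/
def ZeroDim (T : TriSet K σ) : Prop := ∀ i : σ, i ∈ T.lvs

/-- The product of the initials of `T`. -/
noncomputable def prodInit (T : TriSet K σ) : MvPolynomial σ K :=
  (T.elems.map fun e => initialWrt e.1 e.2).prod

/-- The ideal generated by the polynomials of `T`. -/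
noncomputable def ideal (T : TriSet K σ) : Ideal (MvPolynomial σ K) :=
  Ideal.span {p | ∃ e ∈ T.elems, p = e.2}

end TriSet

/-- The saturation `I : J^∞` of an ideal `I` by an element `J`. -/
def satBy (I : Ideal (MvPolynomial σ K)) (J : MvPolynomial σ K) :
    Ideal (MvPolynomial σ K) where
  carrier := {p | ∃ k : ℕ, J ^ k * p ∈ I}
  zero_mem' := ⟨0, by simp⟩
  add_mem' := by
    rintro a b ⟨k, hk⟩ ⟨l, hl⟩
    refine ⟨k + l, ?_⟩
    have h : J ^ (k + l) * (a + b) = J ^ l * (J ^ k * a) + J ^ k * (J ^ l * b) := by ring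
    rw [h]
    exact add_mem (Ideal.mul_mem_left _ _ hk) (Ideal.mul_mem_left _ _ hl)
  smul_mem' := by
    rintro c a ⟨k, hk⟩
    refine ⟨k, ?_⟩
    have h : J ^ k * (c • a) = c * (J ^ k * a) := by rw [smul_eq_mul]; ring
    rw [h]
    exact Ideal.mul_mem_left _ _ hk

namespace TriSet

/-- The saturated ideal `sat(T) = ⟨T⟩ : (∏ initials)^∞` of a triangular set. -/
noncomputable def sat (T : TriSet K σ) : Ideal (MvPolynomial σ K) :=
  satBy T.ideal T.prodInit

/-- The triangular set formed by the first `i` elements of `T`. -/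
def take (T : TriSet K σ) (i : ℕ) : TriSet K σ :=
  ⟨T.elems.take i, T.sorted.sublist (List.take_sublist i T.elems),
    fun e he => T.hlv e (List.mem_of_mem_take he)⟩

/-- `T` is a regular set: each initial is neither zero nor a zero-divisor
modulo the saturated ideal of the preceding subset. -/
def Regular (T : TriSet K σ) : Prop :=
  ∀ i : ℕ, ∀ h : i < T.elems.length,
    initialWrt (T.elems.get ⟨i, h⟩).1 (T.elems.get ⟨i, h⟩).2 ∉ (T.take i).sat ∧
    ∀ p : MvPolynomial σ K,
      initialWrt (T.elems.get ⟨i, h⟩).1 (T.elems.get ⟨i, h⟩).2 * p ∈ (T.take i).sat →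
        p ∈ (T.take i).sat

end TriSet

/-- The zero set, in (the algebraic closure of `K`)^σ, of a set of polynomials. -/
def zeroSet (S : Set (MvPolynomial σ K)) : Set (σ → AlgebraicClosure K) :=
  {x | ∀ p ∈ S, aeval x p = 0}

/-- `Zero(T / ini(T))` : the common zeros of `T` at which no initial of `T` vanishes. -/
def TriSet.zeroQuasi (T : TriSet K σ) : Set (σ → AlgebraicClosure K) :=
  {x | (∀ e ∈ T.elems, aeval x e.2 = 0) ∧
       (∀ e ∈ T.elems, aeval x (initialWrt e.1 e.2) ≠ 0)}

/-- `G` is a (finite) Gröbner basis of `I` with respect to the lex term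
ordering: `G ⊆ I` and the leading monomial of every nonzero element of `I` is
divisible by the leading monomial of some element of `G`. -/
def IsGB (G : Set (MvPolynomial σ K)) (I : Ideal (MvPolynomial σ K)) : Prop :=
  G.Finite ∧ G ⊆ ↑I ∧
  ∀ f ∈ I, f ≠ 0 → ∃ g ∈ G, ∃ mf mg, IsLeadMon f mf ∧ IsLeadMon g mg ∧ ∀ j, mg j ≤ mf j

/-- `G` is the reduced lex Gröbner basis of `I`. -/
def IsReducedGB (G : Set (MvPolynomial σ K)) (I : Ideal (MvPolynomial σ K)) : Prop :=
  IsGB G I ∧ (0 : MvPolynomial σ K) ∉ G ∧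
  (∀ g ∈ G, ∀ m, IsLeadMon g m → g.coeff m = 1) ∧
  (∀ g ∈ G, ∀ g' ∈ G, g' ≠ g → ∀ m ∈ g.support, ∀ m', IsLeadMon g' m' →
    ¬ (∀ j, m' j ≤ m j))

/-- `C` is the W-characteristic set extracted from the (reduced lex Gröbner
basis) `G`: for each leading variable occurring in `G`, `C` contains the
lex-minimal element of `G` with that leading variable. -/
def IsWCharOf (C : TriSet K σ) (G : Set (MvPolynomial σ K)) : Prop :=
  (∀ e ∈ C.elems, e.2 ∈ G ∧
    ∀ g ∈ G, HasLV g e.1 → ∀ mg me, IsLeadMon g mg → IsLeadMon e.2 me → lexLe me mg) ∧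
  (∀ g ∈ G, ∀ i : σ, HasLV g i → i ∈ C.lvs)

/-- The Sylvester-style matrix of two univariate polynomials. -/
noncomputable def sylvester {R : Type*} [CommRing R] (f g : Polynomial R) :
    Matrix (Fin (f.natDegree + g.natDegree)) (Fin (f.natDegree + g.natDegree)) R :=
  Matrix.of fun i j =>
    if (i : ℕ) < g.natDegree then
      (if (i : ℕ) ≤ (j : ℕ) then f.coeff ((j : ℕ) - (i : ℕ)) else 0)
    else
      (if (i : ℕ) - g.natDegree ≤ (j : ℕ) then g.coeff ((j : ℕ) - ((i : ℕ) - g.natDegree))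
       else 0)

/-- The resultant of two univariate polynomials, as the determinant of their
Sylvester matrix. -/
noncomputable def resultantP {R : Type*} [CommRing R] (f g : Polynomial R) : R :=
  (sylvester f g).det

/-- View a multivariate polynomial as a univariate polynomial in the variable `i`. -/
noncomputable def toUni (i : σ) (f : MvPolynomial σ K) :
    Polynomial (MvPolynomial σ K) :=
  aeval (fun j => if j = i then Polynomial.X else Polynomial.C (X j)) f

/-- The resultant of two multivariate polynomials with respect to the variable `i`. -/
noncomputable def resWrt (i : σ) (f g : MvPolynomial σ K) : MvPolynomial σ K :=
  resultantP (toUni i f) (toUni i g)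

/-- The iterated resultant of `f` with respect to a list of
(leading variable, divisor) pairs, used from the head of the list on. -/
noncomputable def iterRes : MvPolynomial σ K → List (σ × MvPolynomial σ K) →
    MvPolynomial σ K
  | f, [] => f
  | f, e :: L => iterRes (resWrt e.1 f e.2) L

end CharDec

open CharDec MvPolynomial

namespace CharDec

variable {K : Type*} [Field K] {σ : Type*} [LinearOrder σ]

lemma aeval_congr_on_vars {A : Type*} [CommSemiring A] [Algebra K A]
    {x y : σ → A} (f : MvPolynomial σ K) (h : ∀ j ∈ f.vars, x j = y j) :
    aeval x f = aeval y f :=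
  MvPolynomial.eval₂Hom_congr' rfl (fun i hi _ => h i hi) rfl

lemma exists_update_root (v : σ) (x : σ → AlgebraicClosure K)
    (P : MvPolynomial σ K) (hv : v ∈ P.vars)
    (hini : aeval x (initialWrt v P) ≠ 0) :
    ∃ t : AlgebraicClosure K, ∀ y : σ → AlgebraicClosure K,
      y v = t → (∀ j : σ, j ≠ v → y j = x j) → aeval y P = 0 := by
  classical
  set φ : MvPolynomial σ K →ₐ[K] Polynomial (AlgebraicClosure K) :=
    aeval (fun j => if j = v then Polynomial.X else Polynomial.C (x j)) with hφ
  have key : ∀ d : ℕ, (φ P).coeff d = aeval x (coeffWrt v d P) := by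
    intro d
    conv_lhs => rw [P.as_sum]
    rw [map_sum, Polynomial.finset_sum_coeff, coeffWrt, map_sum, Finset.sum_filter]
    refine Finset.sum_congr rfl fun m _ => ?_
    have hsplit : monomial m (P.coeff m) =
        monomial (m.update v 0) (P.coeff m) * X v ^ (m v) := by
      rw [X_pow_eq_monomial, monomial_mul, mul_one]
      congr 1
      rw [Finsupp.update_eq_erase_add_single, Finsupp.single_zero, add_zero,
        Finsupp.erase_add_single]
    have hC : φ (monomial (m.update v 0) (P.coeff m)) =
        Polynomial.C (aeval x (monomial (m.update v 0) (P.coeff m))) := by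
      rw [hφ]
      rw [aeval_monomial, aeval_monomial, map_mul, Polynomial.algebraMap_apply]
      congr 1
      rw [Finsupp.prod, Finsupp.prod, map_prod]
      refine Finset.prod_congr rfl fun j hj => ?_
      have hjv : j ≠ v := by
        intro hjv
        have := Finsupp.mem_support_iff.mp hj
        rw [hjv] at this
        simp at this
      rw [if_neg hjv, ← Polynomial.C_pow]
    have hX : φ (X v) = Polynomial.X := by simp [hφ]
    rw [hsplit, map_mul, map_pow, hX, hC, Polynomial.coeff_C_mul_X_pow]
    simp [eq_comm]
  have hd1 : 1 ≤ P.degreeOf v := by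
    obtain ⟨m, hm, hvm⟩ := (mem_vars v).mp hv
    have h1 : 1 ≤ m v := Finsupp.mem_support_iff.mp hvm |>.bot_lt
    exact le_trans h1 (monomial_le_degreeOf v hm)
  have hcoeff : (φ P).coeff (P.degreeOf v) ≠ 0 := by
    rw [key]
    rw [initialWrt] at hini
    exact hini
  have hdeg : (φ P).degree ≠ 0 := by
    have hle := Polynomial.le_degree_of_ne_zero hcoeff
    intro h0
    rw [h0] at hle
    have : P.degreeOf v ≤ 0 := by exact_mod_cast hle
    omega
  obtain ⟨t, ht⟩ := IsAlgClosed.exists_root (φ P) hdeg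
  refine ⟨t, ?_⟩
  intro y hyv hyx
  have hψ : (((Polynomial.aeval t).restrictScalars K).comp φ :
      MvPolynomial σ K →ₐ[K] AlgebraicClosure K) = aeval y := by
    apply MvPolynomial.algHom_ext
    intro j
    by_cases hj : j = v
    · simp [hφ, hj, hyv]
    · simp [hφ, hj, hyx j hj]
  have h2 := congrArg (fun ψ : MvPolynomial σ K →ₐ[K] AlgebraicClosure K => ψ P) hψ
  simp only [AlgHom.comp_apply, AlgHom.coe_restrictScalars'] at h2
  rw [← h2, Polynomial.aeval_def]
  have : Polynomial.eval₂ (algebraMap (AlgebraicClosure K) (AlgebraicClosure K)) t (φ P) = Polynomial.eval t (φ P) := by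
    rw [Polynomial.eval, Algebra.algebraMap_self]
  rw [this]
  exact ht

end CharDec

/-- Every normal triangular set has the projection property:
for each `i`, every common zero of the first `i` elements avoiding the zeros of
all the initials of `N` extends (changing only the leading variables of the
remaining elements) to a zero of the whole of `N` avoiding the zeros of all
the initials. -/
theorem stmt_2 {K : Type*} [Field K] {n : ℕ} (N : TriSet K (Fin n))
    (hnormal : N.Normal) :
    ∀ i : ℕ, i < N.elems.length →
      ∀ x : Fin n → AlgebraicClosure K,
        (∀ e ∈ N.elems.take i, aeval x e.2 = 0) →
        (∀ e ∈ N.elems, aeval x (initialWrt e.1 e.2) ≠ 0) →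
        ∃ y : Fin n → AlgebraicClosure K,
          (∀ j : Fin n, (∀ e ∈ N.elems.drop i, j ≠ e.1) → y j = x j) ∧
          y ∈ N.zeroQuasi := by
  classical
  suffices H : ∀ k i, i + k = N.elems.length →
      ∀ x : Fin n → AlgebraicClosure K,
        (∀ e ∈ N.elems.take i, aeval x e.2 = 0) →
        (∀ e ∈ N.elems, aeval x (initialWrt e.1 e.2) ≠ 0) →
        ∃ y : Fin n → AlgebraicClosure K,
          (∀ j : Fin n, (∀ e ∈ N.elems.drop i, j ≠ e.1) → y j = x j) ∧
          y ∈ N.zeroQuasi by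
    intro i hi x hx hini
    exact H (N.elems.length - i) i (by omega) x hx hini
  intro k
  induction k with
  | zero =>
    intro i hi x hx hini
    have hi' : i = N.elems.length := by omega
    refine ⟨x, fun j _ => rfl, ?_, hini⟩
    intro e he
    exact hx e (by rw [hi', List.take_length]; exact he)
  | succ k ih =>
    intro i hi x hx hini
    have hlt : i < N.elems.length := by omega
    set e := N.elems[i] with he_def
    have he_mem : e ∈ N.elems := List.getElem_mem hlt
    have hLV : HasLV e.2 e.1 := N.hlv e he_mem
    obtain ⟨t, ht⟩ := exists_update_root e.1 x e.2 hLV.1 (hini e he_mem)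
    set y : Fin n → AlgebraicClosure K :=
      fun j => if j = e.1 then t else x j with hy_def
    have hyv : y e.1 = t := by simp [hy_def]
    have hyj : ∀ j : Fin n, j ≠ e.1 → y j = x j := by
      intro j hj
      simp [hy_def, hj]
    have hnotvar_init : ∀ e' ∈ N.elems, e.1 ∉ (initialWrt e'.1 e'.2).vars := by
      intro e' he' hmem
      exact hnormal e' he' e.1 hmem (List.mem_map_of_mem (f := Prod.fst) he_mem)
    have hini_y : ∀ e' ∈ N.elems, aeval y (initialWrt e'.1 e'.2) ≠ 0 := by
      intro e' he'
      have heq : aeval y (initialWrt e'.1 e'.2) = aeval x (initialWrt e'.1 e'.2) :=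
        aeval_congr_on_vars _ (fun j hj =>
          hyj j (fun h => hnotvar_init e' he' (h ▸ hj)))
      rw [heq]
      exact hini e' he'
    have hx_y : ∀ e' ∈ N.elems.take (i + 1), aeval y e'.2 = 0 := by
      intro e' he'
      rw [List.take_succ] at he'
      rcases List.mem_append.mp he' with h1 | h2
      · obtain ⟨jj, hjj, hjje⟩ := List.mem_iff_getElem.mp h1
        have hjlen : jj < i := by
          have := hjj
          simp [List.length_take] at this
          omega
        have hjlen' : jj < N.elems.length := by omega
        have hgetj : (N.elems.take i)[jj] = N.elems[jj] := List.getElem_take ..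
        have hlt' : e'.1 < e.1 := by
          have hp := List.pairwise_iff_getElem.mp N.sorted jj i hjlen' hlt hjlen
          rw [← hjje, hgetj]
          exact hp
        have heq : aeval y e'.2 = aeval x e'.2 :=
          aeval_congr_on_vars _ (fun j hj => by
            have hle := (N.hlv e' (List.mem_of_mem_take h1)).2 j hj
            exact hyj j (ne_of_lt (lt_of_le_of_lt hle hlt')))
        rw [heq]
        exact hx e' h1
      · have he'e : e' = e := by
          rw [List.getElem?_eq_getElem hlt] at h2
          simpa using h2
        rw [he'e]
        exact ht y hyv hyj
    obtain ⟨z, hz1, hz2⟩ := ih (i + 1) (by omega) y hx_y hini_y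
    refine ⟨z, ?_, hz2⟩
    intro j hj
    have hdrop : N.elems.drop i = e :: N.elems.drop (i + 1) :=
      List.drop_eq_getElem_cons hlt
    rw [hdrop] at hj
    have hje : j ≠ e.1 := hj e (List.mem_cons_self)
    rw [hz1 j (fun e' he' => hj e' (List.mem_cons_of_mem _ he'))]
    exact hyj j hje
end

section
/- Let T = [T_1,...,T_r] be a regular triangular set in K[x_1,...,x_n] with lv(T_r) < x_n, and let P = P_d x_m^d + ... + P_1 x_m + P_0 where lv(P) = x_m > lv(T_r), deg(P, x_m) = d, and each P_i ∈ K[x_1,...,x_{m−1}]. Then prem(P, T) = 0 if and only if prem(P_i, T) = 0 for all i = 0, 1, ..., d. -/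
open MvPolynomial

namespace CharDec

section Infra
set_option linter.unusedSectionVars false

variable {K : Type*} [Field K] {σ : Type*} [LinearOrder σ]

lemma update_update (b : σ →₀ ℕ) (i : σ) (x y : ℕ) :
    (b.update i x).update i y = b.update i y := by
  ext j; classical
  simp [Finsupp.coe_update, Function.update_idem]

lemma update_apply_self (b : σ →₀ ℕ) (i : σ) (x : ℕ) : (b.update i x) i = x := by
  classical simp [Finsupp.coe_update]

lemma update_of_eq (b : σ →₀ ℕ) (i : σ) (h : b i = 0) : b.update i 0 = b := by
  conv_rhs => rw [← Finsupp.update_self b i]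
  rw [h]

lemma coeff_coeffWrt (i : σ) (d : ℕ) (f : MvPolynomial σ K) (ν : σ →₀ ℕ) :
    (coeffWrt i d f).coeff ν = if ν i = 0 then f.coeff (ν.update i d) else 0 := by
  classical
  rw [coeffWrt, MvPolynomial.coeff_sum]
  simp_rw [MvPolynomial.coeff_monomial]
  split_ifs with h
  · rw [Finset.sum_eq_single (ν.update i d)]
    · rw [if_pos]
      rw [update_update, ← h, Finsupp.update_self]
    · intro b hb hbne
      rw [if_neg]
      intro hbe
      apply hbne
      rw [← hbe, update_update]
      have : b i = d := (Finset.mem_filter.mp hb).2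
      rw [← this, Finsupp.update_self]
    · intro hnot
      rw [if_pos (by rw [update_update, ← h, Finsupp.update_self]), ← MvPolynomial.notMem_support_iff]
      intro hmem
      exact hnot (Finset.mem_filter.mpr ⟨hmem, update_apply_self _ _ _⟩)
  · apply Finset.sum_eq_zero
    intro b hb
    rw [if_neg]
    intro hbe
    exact h (by rw [← hbe, update_apply_self])

lemma mem_support_coeffWrt {i : σ} {d : ℕ} {f : MvPolynomial σ K} {ν : σ →₀ ℕ}
    (h : ν ∈ (coeffWrt i d f).support) : ν i = 0 ∧ ν.update i d ∈ f.support := by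
  classical
  rw [MvPolynomial.mem_support_iff, coeff_coeffWrt] at h
  split_ifs at h with h0
  · exact ⟨h0, MvPolynomial.mem_support_iff.mpr h⟩
  · exact absurd rfl h

lemma not_mem_vars_coeffWrt_self (i : σ) (d : ℕ) (f : MvPolynomial σ K) :
    i ∉ (coeffWrt i d f).vars := by
  intro hv
  obtain ⟨μ, hμ, hiμ⟩ := (MvPolynomial.mem_vars i).mp hv
  exact (Finsupp.mem_support_iff.mp hiμ) ((mem_support_coeffWrt hμ).1)

lemma vars_coeffWrt_subset (i : σ) (d : ℕ) (f : MvPolynomial σ K) :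
    (coeffWrt i d f).vars ⊆ f.vars := by
  intro j hj
  obtain ⟨μ, hμ, hjμ⟩ := (MvPolynomial.mem_vars j).mp hj
  obtain ⟨h0, hmem⟩ := mem_support_coeffWrt hμ
  classical
  apply (MvPolynomial.mem_vars j).mpr ⟨μ.update i d, hmem, ?_⟩
  rw [Finsupp.mem_support_iff] at hjμ ⊢
  rwa [Finsupp.coe_update, Function.update_apply, if_neg]
  intro hji
  subst hji
  exact hjμ h0

lemma not_mem_vars_initialWrt (i : σ) (f : MvPolynomial σ K) :
    i ∉ (initialWrt i f).vars := not_mem_vars_coeffWrt_self _ _ _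

lemma vars_initialWrt_subset (i : σ) (f : MvPolynomial σ K) :
    (initialWrt i f).vars ⊆ f.vars := vars_coeffWrt_subset _ _ _

lemma degreeOf_eq_zero_of_not_mem_vars {i : σ} {f : MvPolynomial σ K} (h : i ∉ f.vars) :
    f.degreeOf i = 0 := by
  rw [← Nat.le_zero, MvPolynomial.degreeOf_le_iff]
  intro μ hμ
  by_contra hne
  exact h ((MvPolynomial.mem_vars i).mpr ⟨μ, hμ, Finsupp.mem_support_iff.mpr (by omega)⟩)

lemma pos_degreeOf_of_mem_vars {i : σ} {f : MvPolynomial σ K} (h : i ∈ f.vars) :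
    0 < f.degreeOf i := by
  by_contra hc
  push_neg at hc
  obtain ⟨μ, hμ, hiμ⟩ := (MvPolynomial.mem_vars i).mp h
  have h1 := MvPolynomial.monomial_le_degreeOf i hμ
  have := Finsupp.mem_support_iff.mp hiμ
  omega

lemma coeffWrt_eq_zero_of_gt {i : σ} {d : ℕ} {f : MvPolynomial σ K}
    (h : f.degreeOf i < d) : coeffWrt i d f = 0 := by
  rw [coeffWrt, Finset.filter_false_of_mem, Finset.sum_empty]
  intro μ hμ hd
  exact absurd (MvPolynomial.monomial_le_degreeOf i hμ) (by omega)

end Infra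

end CharDec

namespace CharDec

section ToUni
set_option linter.unusedSectionVars false
variable {K : Type*} [Field K] {σ : Type*} [LinearOrder σ]
open Polynomial

/-- `toUni` as an algebra hom. -/
noncomputable def toUniHom (i : σ) : MvPolynomial σ K →ₐ[K] Polynomial (MvPolynomial σ K) :=
  MvPolynomial.aeval (fun j => if j = i then Polynomial.X else Polynomial.C (MvPolynomial.X j))

lemma toUni_eq (i : σ) (f : MvPolynomial σ K) : toUni i f = toUniHom i f := rfl

lemma erase_eq_update (μ : σ →₀ ℕ) (i : σ) : Finsupp.erase i μ = μ.update i 0 := by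
  classical
  ext j
  by_cases h : j = i
  · subst h; simp [Finsupp.erase_same, update_apply_self]
  · simp [Finsupp.erase_ne h, Finsupp.coe_update, Function.update_apply, h]

lemma toUni_monomial (i : σ) (μ : σ →₀ ℕ) (c : K) :
    toUni i (MvPolynomial.monomial μ c) =
      Polynomial.C (MvPolynomial.monomial (μ.update i 0) c) * Polynomial.X ^ (μ i) := by
  classical
  rw [toUni_eq, toUniHom, MvPolynomial.aeval_monomial]
  have hsplit : μ = Finsupp.single i (μ i) + Finsupp.erase i μ :=
    (Finsupp.single_add_erase i μ).symm
  have h0 : ∀ a : σ, (if a = i then (Polynomial.X : Polynomial (MvPolynomial σ K))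
      else Polynomial.C (MvPolynomial.X a)) ^ (0:ℕ) = 1 := fun a => pow_zero _
  conv_lhs => rw [hsplit]
  rw [Finsupp.prod_add_index' h0 (fun a b₁ b₂ => pow_add _ b₁ b₂)]
  rw [Finsupp.prod_single_index
    (h := fun a k => (if a = i then (Polynomial.X : Polynomial (MvPolynomial σ K))
      else Polynomial.C (MvPolynomial.X a)) ^ k) (h0 i), if_pos rfl]
  have herase : (Finsupp.erase i μ).prod
      (fun j k => (if j = i then (Polynomial.X : Polynomial (MvPolynomial σ K))
        else Polynomial.C (MvPolynomial.X j)) ^ k)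
      = Polynomial.C ((Finsupp.erase i μ).prod fun j k => MvPolynomial.X j ^ k) := by
    rw [Finsupp.prod_congr (g2 := fun j k => Polynomial.C (MvPolynomial.X j ^ k)) ?_]
    · rw [Finsupp.prod, Finsupp.prod, map_prod]
    · intro x hx
      rw [Finsupp.support_erase, Finset.mem_erase] at hx
      simp only [if_neg hx.1, map_pow]
  rw [herase, MvPolynomial.monomial_eq, map_mul, erase_eq_update]
  have : (algebraMap K (Polynomial (MvPolynomial σ K))) c
      = Polynomial.C (MvPolynomial.C c) := rfl
  rw [this]
  ring

lemma toUni_C_of_not_mem_vars {i : σ} {f : MvPolynomial σ K} (h : i ∉ f.vars) :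
    toUni i f = Polynomial.C f := by
  classical
  conv_lhs => rw [toUni_eq, MvPolynomial.as_sum f]
  rw [map_sum]
  have : ∀ μ ∈ f.support, (toUniHom (K := K) i) (MvPolynomial.monomial μ (f.coeff μ))
      = Polynomial.C (MvPolynomial.monomial μ (f.coeff μ)) := by
    intro μ hμ
    have hμi : μ i = 0 := by
      by_contra hne
      exact h ((MvPolynomial.mem_vars i).mpr ⟨μ, hμ, Finsupp.mem_support_iff.mpr hne⟩)
    rw [← toUni_eq, toUni_monomial, hμi, pow_zero, mul_one, update_of_eq _ _ hμi]
  rw [Finset.sum_congr rfl this, ← map_sum]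
  conv_rhs => rw [MvPolynomial.as_sum f]

lemma coeff_toUni (i : σ) (f : MvPolynomial σ K) (d : ℕ) :
    (toUni i f).coeff d = coeffWrt i d f := by
  classical
  conv_lhs => rw [toUni_eq, MvPolynomial.as_sum f]
  rw [map_sum, Polynomial.finset_sum_coeff]
  have : ∀ μ ∈ f.support, ((toUniHom (K := K) i) (MvPolynomial.monomial μ (f.coeff μ))).coeff d
      = if μ i = d then MvPolynomial.monomial (μ.update i 0) (f.coeff μ) else 0 := by
    intro μ hμ
    rw [← toUni_eq, toUni_monomial, Polynomial.coeff_C_mul, Polynomial.coeff_X_pow,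
      mul_ite, mul_one, mul_zero]
    exact if_congr eq_comm rfl rfl
  rw [Finset.sum_congr rfl this, ← Finset.sum_filter, coeffWrt]

lemma eval_toUni (i : σ) (f : MvPolynomial σ K) :
    (toUni i f).eval (MvPolynomial.X i) = f := by
  have : (Polynomial.evalRingHom (MvPolynomial.X i)).comp (toUniHom (K := K) i).toRingHom
      = RingHom.id (MvPolynomial σ K) := by
    apply MvPolynomial.ringHom_ext
    · intro r
      simp [toUniHom]
    · intro j
      by_cases h : j = i
      · subst h; simp [toUniHom]
      · simp [toUniHom, h]
  rw [toUni_eq]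
  calc (Polynomial.evalRingHom (MvPolynomial.X i)) ((toUniHom (K := K) i).toRingHom f) = f := by
        rw [← RingHom.comp_apply, this, RingHom.id_apply]

lemma natDegree_toUni (i : σ) (f : MvPolynomial σ K) :
    (toUni i f).natDegree = f.degreeOf i := by
  apply le_antisymm
  · rw [Polynomial.natDegree_le_iff_coeff_eq_zero]
    intro N hN
    rw [coeff_toUni]
    exact coeffWrt_eq_zero_of_gt hN
  · rw [MvPolynomial.degreeOf_le_iff]
    intro μ hμ
    apply Polynomial.le_natDegree_of_ne_zero
    rw [coeff_toUni, MvPolynomial.ne_zero_iff]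
    exact ⟨μ.update i 0, by
      rw [coeff_coeffWrt, if_pos (update_apply_self _ _ _), update_update, Finsupp.update_self]
      exact MvPolynomial.mem_support_iff.mp hμ⟩
  -- note: coeff ν (coeffWrt) uses ν i = 0; (μ.update i 0) i = 0 ✓

lemma leadingCoeff_toUni (i : σ) (f : MvPolynomial σ K) :
    (toUni i f).leadingCoeff = initialWrt i f := by
  rw [Polynomial.leadingCoeff, natDegree_toUni, coeff_toUni, initialWrt]

lemma toUni_mul (i : σ) (f g : MvPolynomial σ K) :
    toUni i (f * g) = toUni i f * toUni i g := by
  rw [toUni_eq, toUni_eq, toUni_eq, map_mul]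

lemma toUni_add (i : σ) (f g : MvPolynomial σ K) :
    toUni i (f + g) = toUni i f + toUni i g := by
  rw [toUni_eq, toUni_eq, toUni_eq, map_add]

lemma toUni_sub (i : σ) (f g : MvPolynomial σ K) :
    toUni i (f - g) = toUni i f - toUni i g := by
  rw [toUni_eq, toUni_eq, toUni_eq, map_sub]

lemma toUni_pow (i : σ) (f : MvPolynomial σ K) (k : ℕ) :
    toUni i (f ^ k) = toUni i f ^ k := by
  rw [toUni_eq, toUni_eq, map_pow]

lemma toUni_X_self (i : σ) : toUni i (MvPolynomial.X i : MvPolynomial σ K) = Polynomial.X := by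
  rw [toUni_eq, toUniHom, MvPolynomial.aeval_X, if_pos rfl]

lemma toUni_injective (i : σ) : Function.Injective (toUni (K := K) i) := by
  intro f g h
  rw [← eval_toUni i f, ← eval_toUni i g, h]

/-- Reconstruction: a polynomial is determined by its `toUni` coefficients. -/
lemma mem_ideal_of_coeffs (I : Ideal (MvPolynomial σ K)) (v : σ) (u : MvPolynomial σ K)
    (h : ∀ j, (toUni v u).coeff j ∈ I) : u ∈ I := by
  have : u = ((toUni v u).sum fun e a => a * (MvPolynomial.X v) ^ e) := by
    rw [← Polynomial.eval_eq_sum, eval_toUni]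
  rw [this, Polynomial.sum]
  exact Ideal.sum_mem I (fun e he => Ideal.mul_mem_right _ I (h e))

end ToUni

end CharDec

namespace CharDec

section Division
set_option linter.unusedSectionVars false
open Polynomial

/-- Key coefficient-extraction lemma: if all high coefficients of `b*q` lie in an
ideal `I` modulo which the leading coefficient of `q` is regular, then all
coefficients of `b` lie in `I`. -/
lemma polykey {S : Type*} [CommRing S] (I : Ideal S) (q b : Polynomial S)
    (hd : 0 < q.natDegree) (hreg : ∀ p, q.leadingCoeff * p ∈ I → p ∈ I)
    (hco : ∀ t, q.natDegree ≤ t → (b * q).coeff t ∈ I) : ∀ j, b.coeff j ∈ I := by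
  classical
  suffices H : ∀ c j, b.natDegree < j + c → b.coeff j ∈ I by
    intro j
    exact H (b.natDegree + 1) j (by omega)
  intro c
  induction c with
  | zero =>
    intro j h
    rw [Polynomial.coeff_eq_zero_of_natDegree_lt (by omega)]
    exact I.zero_mem
  | succ c ih =>
    intro j h
    by_cases hj : b.natDegree < j + c
    · exact ih j hj
    apply hreg
    have hmem : ((j, q.natDegree) : ℕ × ℕ) ∈ Finset.HasAntidiagonal.antidiagonal (j + q.natDegree) := by
      simp
    have hsum := Finset.sum_erase_add (Finset.HasAntidiagonal.antidiagonal (j + q.natDegree))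
      (fun x => b.coeff x.1 * q.coeff x.2) hmem
    have hkey : b.coeff j * q.leadingCoeff
        = (b * q).coeff (j + q.natDegree)
          - ∑ x ∈ (Finset.HasAntidiagonal.antidiagonal (j + q.natDegree)).erase (j, q.natDegree),
              b.coeff x.1 * q.coeff x.2 := by
      rw [Polynomial.coeff_mul, ← hsum, Polynomial.leadingCoeff]
      ring
    rw [mul_comm, hkey]
    apply Ideal.sub_mem
    · exact hco _ (by omega)
    · apply Ideal.sum_mem
      rintro ⟨a, e⟩ hx
      rw [Finset.mem_erase, Finset.HasAntidiagonal.mem_antidiagonal] at hx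
      rcases lt_trichotomy e q.natDegree with he | he | he
      · -- then a > j, so b.coeff a ∈ I by ih
        have ha : j < a := by omega
        have : b.coeff a ∈ I := by
          apply ih
          omega
        exact Ideal.mul_mem_right _ I this
      · exact absurd (by simp [← hx.2, he]; omega : (a, e) = ((j, q.natDegree) : ℕ × ℕ)) hx.1
      · rw [Polynomial.coeff_eq_zero_of_natDegree_lt he, mul_zero]
        exact I.zero_mem

variable {K : Type*} [Field K] {σ : Type*} [LinearOrder σ]

/-- Existence of pseudo-division with the exact classical exponent. -/
lemma exists_isPrem (y : σ) {Q : MvPolynomial σ K} (hQ : 0 < Q.degreeOf y)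
    (P : MvPolynomial σ K) : ∃ R, IsPrem y Q P R := by
  classical
  suffices H : ∀ N (P : MvPolynomial σ K), P.degreeOf y ≤ N → ∃ R, IsPrem y Q P R from
    H (P.degreeOf y) P le_rfl
  intro N
  induction N with
  | zero =>
    intro P hP
    refine ⟨P, 0, ?_, ?_⟩
    · rw [Nat.le_zero.mp hP]
      have : 1 - Q.degreeOf y = 0 := by omega
      rw [zero_add, this, pow_zero, one_mul, zero_mul, zero_add]
    · omega
  | succ N ih =>
    intro P hP
    by_cases hsmall : P.degreeOf y < Q.degreeOf y
    · refine ⟨P, 0, ?_, hsmall⟩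
      have : P.degreeOf y + 1 - Q.degreeOf y = 0 := by omega
      rw [this, pow_zero, one_mul, zero_mul, zero_add]
    push_neg at hsmall
    by_cases hle : P.degreeOf y ≤ N
    · exact ih P hle
    have hN : P.degreeOf y = N + 1 := by omega
    set d := Q.degreeOf y with hd
    set s := P.degreeOf y - d with hs
    set ini := initialWrt y Q with hini
    set iP := initialWrt y P with hiP
    set P₁ := ini * P - iP * MvPolynomial.X y ^ s * Q with hP₁
    have hyini : y ∉ ini.vars := not_mem_vars_initialWrt y Q
    have hyiP : y ∉ iP.vars := not_mem_vars_initialWrt y P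
    -- degree drop
    have hdrop : P₁.degreeOf y ≤ N := by
      rw [← natDegree_toUni, Polynomial.natDegree_le_iff_coeff_eq_zero]
      intro M hM
      rw [hP₁, toUni_sub, toUni_mul, toUni_mul, toUni_mul, toUni_pow, toUni_X_self,
        toUni_C_of_not_mem_vars hyini, toUni_C_of_not_mem_vars hyiP]
      rw [Polynomial.coeff_sub, mul_assoc, Polynomial.coeff_C_mul, Polynomial.coeff_C_mul]
      rw [mul_comm (Polynomial.X ^ s) (toUni y Q), Polynomial.coeff_mul_X_pow']
      rcases Nat.lt_or_ge (N + 1) M with hM' | hM'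
      · -- M > deg P : both vanish
        have h1 : (toUni y P).coeff M = 0 := by
          apply Polynomial.coeff_eq_zero_of_natDegree_lt
          rw [natDegree_toUni]; omega
        have h2 : (toUni y Q).coeff (M - s) = 0 := by
          apply Polynomial.coeff_eq_zero_of_natDegree_lt
          rw [natDegree_toUni, ← hd]
          omega
        rw [h1, h2]
        split_ifs <;> ring
      · -- M = N + 1 = deg P
        have hMeq : M = P.degreeOf y := by omega
        have h1 : (toUni y P).coeff M = iP := by
          rw [coeff_toUni, hMeq, hiP, initialWrt]
        have h2 : (toUni y Q).coeff (M - s) = ini := by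
          have : M - s = d := by omega
          rw [coeff_toUni, this, hini, initialWrt]
        rw [h1, if_pos (by omega : s ≤ M), h2]
        ring
    obtain ⟨R, A₁, hEq₁, hR₁⟩ := ih P₁ hdrop
    set e₁ := P₁.degreeOf y + 1 - d with he₁
    have he₁s : e₁ ≤ s := by omega
    refine ⟨ini ^ (s - e₁) * R, ini ^ (s - e₁) * A₁ + ini ^ s * iP * MvPolynomial.X y ^ s, ?_, ?_⟩
    · have hk : P.degreeOf y + 1 - d = s + 1 := by omega
      rw [hk]
      have h2 : ini ^ s * P₁ = ini ^ (s - e₁) * A₁ * Q + ini ^ (s - e₁) * R := by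
        have hpow : ini ^ s = ini ^ (s - e₁) * ini ^ e₁ := by
          rw [← pow_add]
          congr 1
          omega
        rw [hpow, mul_assoc, hEq₁]
        ring
      have h3 : ini * P = P₁ + iP * MvPolynomial.X y ^ s * Q := by rw [hP₁]; ring
      calc ini ^ (s + 1) * P = ini ^ s * (ini * P) := by ring
        _ = ini ^ s * P₁ + ini ^ s * iP * MvPolynomial.X y ^ s * Q := by rw [h3]; ring
        _ = (ini ^ (s - e₁) * A₁ + ini ^ s * iP * MvPolynomial.X y ^ s) * Q
            + ini ^ (s - e₁) * R := by rw [h2]; ring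
    · calc (ini ^ (s - e₁) * R).degreeOf y
          ≤ (ini ^ (s - e₁)).degreeOf y + R.degreeOf y := MvPolynomial.degreeOf_mul_le _ _ _
        _ = R.degreeOf y := by
            rw [degreeOf_eq_zero_of_not_mem_vars (fun hv => hyini ((MvPolynomial.vars_pow _ _) hv)),
              zero_add]
        _ < Q.degreeOf y := hR₁

end Division

end CharDec

namespace CharDec

section SatLemmas
set_option linter.unusedSectionVars false
set_option linter.unusedVariables false
open Polynomial

variable {K : Type*} [Field K] {σ : Type*} [LinearOrder σ]

lemma mem_sat_iff {T : TriSet K σ} {f : MvPolynomial σ K} :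
    f ∈ T.sat ↔ ∃ k : ℕ, T.prodInit ^ k * f ∈ T.ideal := Iff.rfl

lemma gen_mem_ideal {T : TriSet K σ} {e : σ × MvPolynomial σ K} (he : e ∈ T.elems) :
    e.2 ∈ T.ideal :=
  Ideal.subset_span ⟨e, he, rfl⟩

lemma ideal_le_sat (T : TriSet K σ) : T.ideal ≤ T.sat := by
  intro p hp
  exact ⟨0, by rwa [pow_zero, one_mul]⟩

lemma sat_saturated {T : TriSet K σ} {f : MvPolynomial σ K} {k : ℕ}
    (h : T.prodInit ^ k * f ∈ T.sat) : f ∈ T.sat := by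
  obtain ⟨l, hl⟩ := h
  refine ⟨l + k, ?_⟩
  rw [pow_add, mul_assoc]
  exact hl

-- splitting lemmas, for T.elems = T'.elems ++ [e]
lemma prodInit_split {T T' : TriSet K σ} {e : σ × MvPolynomial σ K}
    (hsplit : T.elems = T'.elems ++ [e]) :
    T.prodInit = T'.prodInit * initialWrt e.1 e.2 := by
  rw [TriSet.prodInit, TriSet.prodInit, hsplit, List.map_append, List.prod_append]
  simp

lemma ideal_split {T T' : TriSet K σ} {e : σ × MvPolynomial σ K}
    (hsplit : T.elems = T'.elems ++ [e]) :
    T.ideal = T'.ideal ⊔ Ideal.span {e.2} := by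
  rw [TriSet.ideal, TriSet.ideal, ← Ideal.span_union]
  congr 1
  ext p
  simp only [Set.mem_setOf_eq, Set.mem_union, Set.mem_singleton_iff, hsplit, List.mem_append,
    List.mem_singleton]
  constructor
  · rintro ⟨e', (h | h), rfl⟩
    · exact Or.inl ⟨e', h, rfl⟩
    · subst h; exact Or.inr rfl
  · rintro (⟨e', h, rfl⟩ | rfl)
    · exact ⟨e', Or.inl h, rfl⟩
    · exact ⟨e, Or.inr rfl, rfl⟩

lemma sat_mono_split {T T' : TriSet K σ} {e : σ × MvPolynomial σ K}
    (hsplit : T.elems = T'.elems ++ [e]) : T'.sat ≤ T.sat := by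
  intro f hf
  obtain ⟨k, hk⟩ := hf
  refine ⟨k, ?_⟩
  have : T.prodInit ^ k * f = initialWrt e.1 e.2 ^ k * (T'.prodInit ^ k * f) := by
    rw [prodInit_split hsplit]
    ring
  rw [this, ideal_split hsplit]
  exact Ideal.mul_mem_left _ _ (Ideal.mem_sup_left hk)

lemma ini_sat_cancel {T T' : TriSet K σ} {e : σ × MvPolynomial σ K}
    (hsplit : T.elems = T'.elems ++ [e]) {f : MvPolynomial σ K} {k : ℕ}
    (h : initialWrt e.1 e.2 ^ k * f ∈ T.sat) : f ∈ T.sat := by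
  obtain ⟨l, hl⟩ := h
  refine ⟨l + k, ?_⟩
  have : T.prodInit ^ (l + k) * f
      = T'.prodInit ^ k * (T.prodInit ^ l * (initialWrt e.1 e.2 ^ k * f)) := by
    rw [prodInit_split hsplit]
    ring
  rw [this]
  exact Ideal.mul_mem_left _ _ hl

lemma reg_pow_cancel {J : Ideal (MvPolynomial σ K)} {h : MvPolynomial σ K}
    (hreg : ∀ p, h * p ∈ J → p ∈ J) {k : ℕ} {p : MvPolynomial σ K}
    (hp : h ^ k * p ∈ J) : p ∈ J := by
  induction k generalizing p with
  | zero => rwa [pow_zero, one_mul] at hp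
  | succ k ih =>
    apply hreg
    apply ih
    rw [← mul_assoc, ← pow_succ]
    exact hp

-- TriSet extensionality for sat etc.
lemma triSet_eq {T T' : TriSet K σ} (h : T.elems = T'.elems) : T = T' := by
  cases T; cases T'
  simp only at h
  subst h
  rfl

lemma take_take (T : TriSet K σ) {i j : ℕ} (hij : i ≤ j) :
    (T.take j).take i = T.take i := by
  apply triSet_eq
  show (T.elems.take j).take i = T.elems.take i
  rw [List.take_take, min_eq_left hij]

lemma regular_take {T : TriSet K σ} (hreg : T.Regular) (j : ℕ) : (T.take j).Regular := by
  intro i hi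
  have hlen : (T.take j).elems.length = min j T.elems.length := by
    show (T.elems.take j).length = _
    rw [List.length_take]
  have hij : i < j := by omega
  have hiT : i < T.elems.length := by omega
  have hget : (T.take j).elems.get ⟨i, hi⟩ = T.elems.get ⟨i, hiT⟩ := by
    show (T.elems.take j).get _ = _
    exact List.getElem_take
  rw [hget, take_take T (le_of_lt hij)]
  exact hreg i hiT

-- coefficient stability of the ideal
lemma ideal_coeff_mem {T : TriSet K σ} {v : σ} (hv : ∀ e ∈ T.elems, v ∉ e.2.vars)
    {u : MvPolynomial σ K} (hu : u ∈ T.ideal) (j : ℕ) : (toUni v u).coeff j ∈ T.ideal := by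
  classical
  revert j
  refine Submodule.span_induction ?_ ?_ ?_ ?_ hu
  · rintro x ⟨e, he, rfl⟩ j
    rw [toUni_C_of_not_mem_vars (hv e he), Polynomial.coeff_C]
    split_ifs
    · exact gen_mem_ideal he
    · exact (TriSet.ideal T).zero_mem
  · intro j
    rw [toUni_eq, map_zero, Polynomial.coeff_zero]
    exact (TriSet.ideal T).zero_mem
  · intro x y hx hy hx' hy' j
    rw [toUni_add, Polynomial.coeff_add]
    exact Ideal.add_mem _ (hx' j) (hy' j)
  · intro a x hx hx' j
    rw [smul_eq_mul, toUni_mul, Polynomial.coeff_mul]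
    apply Ideal.sum_mem
    rintro ⟨i₁, i₂⟩ _
    exact Ideal.mul_mem_left _ _ (hx' i₂)

lemma vars_list_prod {l : List (MvPolynomial σ K)} {v : σ}
    (h : ∀ p ∈ l, v ∉ p.vars) : v ∉ l.prod.vars := by
  classical
  induction l with
  | nil =>
    rw [List.prod_nil, MvPolynomial.vars_one]
    exact Finset.notMem_empty v
  | cons a l ih =>
    rw [List.prod_cons]
    intro hv
    rcases Finset.mem_union.mp (MvPolynomial.vars_mul _ _ hv) with h' | h'
    · exact h a List.mem_cons_self h'
    · exact ih (fun p hp => h p (List.mem_cons_of_mem a hp)) h'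

lemma not_mem_vars_prodInit {T : TriSet K σ} {v : σ}
    (hv : ∀ e ∈ T.elems, v ∉ e.2.vars) : v ∉ T.prodInit.vars := by
  apply vars_list_prod
  intro p hp
  obtain ⟨e, he, rfl⟩ := List.mem_map.mp hp
  exact fun hvv => hv e he (vars_initialWrt_subset e.1 e.2 hvv)

lemma sat_coeff_mem {T : TriSet K σ} {v : σ} (hv : ∀ e ∈ T.elems, v ∉ e.2.vars)
    {u : MvPolynomial σ K} (hu : u ∈ T.sat) (j : ℕ) : (toUni v u).coeff j ∈ T.sat := by
  obtain ⟨k, hk⟩ := hu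
  refine ⟨k, ?_⟩
  have hvpk : v ∉ (T.prodInit ^ k).vars :=
    fun hvv => not_mem_vars_prodInit hv (MvPolynomial.vars_pow _ _ hvv)
  have : T.prodInit ^ k * (toUni v u).coeff j = (toUni v (T.prodInit ^ k * u)).coeff j := by
    rw [toUni_mul, toUni_C_of_not_mem_vars hvpk, Polynomial.coeff_C_mul]
  rw [this]
  exact ideal_coeff_mem hv hk j

end SatLemmas

end CharDec

namespace CharDec

section Main
set_option linter.unusedSectionVars false
set_option linter.unusedVariables false
open Polynomial

variable {K : Type*} [Field K] {σ : Type*} [LinearOrder σ]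

theorem sat_iff_iterPrem_aux :
    ∀ (r : ℕ) (T : TriSet K σ), T.elems.length = r → T.Regular →
      ∀ f : MvPolynomial σ K, f ∈ T.sat ↔ IterPrem f T.elems.reverse 0 := by
  intro r
  induction r with
  | zero =>
    intro T hlen hreg f
    have hnil : T.elems = [] := List.length_eq_zero_iff.mp hlen
    have hiter : IterPrem f T.elems.reverse 0 ↔ (0 : MvPolynomial σ K) = f := by
      rw [hnil]
      exact Iff.rfl
    have hgen : {p : MvPolynomial σ K | ∃ e ∈ T.elems, p = e.2} = ∅ := by
      rw [hnil]; simp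
    have hideal : T.ideal = ⊥ := by rw [TriSet.ideal, hgen, Ideal.span_empty]
    have hprod : T.prodInit = 1 := by rw [TriSet.prodInit, hnil]; simp
    rw [hiter, mem_sat_iff, hideal, hprod]
    simp [eq_comm]
  | succ r IH =>
    intro T hlen hreg f
    have hr : r < T.elems.length := by omega
    set e := T.elems.get ⟨r, hr⟩ with he
    set T' := T.take r with hT'
    have hsplit : T.elems = T'.elems ++ [e] := by
      have h1 := List.take_concat_get hr
      rw [List.concat_eq_append] at h1
      show T.elems = T.elems.take r ++ [e]
      rw [he, List.get_eq_getElem, h1, ← hlen, List.take_length]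
    have hemem : e ∈ T.elems := by rw [hsplit]; exact List.mem_append_right _ (by simp)
    have hrev : T.elems.reverse = e :: T'.elems.reverse := by rw [hsplit]; simp
    have hlvE := T.hlv e hemem
    have hd : 0 < e.2.degreeOf e.1 := pos_degreeOf_of_mem_vars hlvE.1
    have hT'len : T'.elems.length = r := by
      show (T.elems.take r).length = r
      rw [List.length_take]
      omega
    have hT'reg : T'.Regular := regular_take hreg r
    have hlvlt : ∀ e' ∈ T'.elems, e'.1 < e.1 := by
      have hs := T.sorted
      rw [hsplit] at hs
      obtain ⟨-, -, hcross⟩ := List.pairwise_append.mp hs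
      intro e' he'
      exact hcross e' he' e (by simp)
    have hyT' : ∀ e' ∈ T'.elems, e.1 ∉ e'.2.vars := by
      intro e' he' hv
      have h1 := (T.hlv e' (by rw [hsplit]; exact List.mem_append_left _ he')).2 e.1 hv
      exact absurd h1 (not_le.mpr (hlvlt e' he'))
    have hregE := hreg r hr
    have hregE2 : ∀ p : MvPolynomial σ K, initialWrt e.1 e.2 * p ∈ T'.sat → p ∈ T'.sat :=
      hregE.2
    have hyini : e.1 ∉ (initialWrt e.1 e.2).vars := not_mem_vars_initialWrt e.1 e.2
    constructor
    · -- hard direction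
      intro hf
      obtain ⟨R, A, hEq, hdegR⟩ := exists_isPrem e.1 hd f
      have hRT : R ∈ T.sat := by
        have h1 : initialWrt e.1 e.2 ^ (f.degreeOf e.1 + 1 - e.2.degreeOf e.1) * f ∈ T.sat :=
          Ideal.mul_mem_left _ _ hf
        have h2 : A * e.2 ∈ T.sat :=
          Ideal.mul_mem_left _ _ (ideal_le_sat T (gen_mem_ideal hemem))
        have h3 : R = initialWrt e.1 e.2 ^ (f.degreeOf e.1 + 1 - e.2.degreeOf e.1) * f
            - A * e.2 := by rw [hEq]; ring
        rw [h3]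
        exact Ideal.sub_mem _ h1 h2
      obtain ⟨k₂, hk₂⟩ := hRT
      rw [ideal_split hsplit] at hk₂
      obtain ⟨E, hE, z, hz, hEz⟩ := Submodule.mem_sup.mp hk₂
      obtain ⟨B, hB⟩ := Ideal.mem_span_singleton'.mp hz
      have hEq2 : (T'.prodInit ^ k₂ * initialWrt e.1 e.2 ^ k₂) * R = E + B * e.2 := by
        calc (T'.prodInit ^ k₂ * initialWrt e.1 e.2 ^ k₂) * R = T.prodInit ^ k₂ * R := by
              rw [prodInit_split hsplit]; ring
          _ = E + z := hEz.symm
          _ = E + B * e.2 := by rw [hB]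
      have hyc : e.1 ∉ (T'.prodInit ^ k₂ * initialWrt e.1 e.2 ^ k₂).vars := by
        intro hv
        classical
        rcases Finset.mem_union.mp (MvPolynomial.vars_mul _ _ hv) with h' | h'
        · exact not_mem_vars_prodInit hyT' (MvPolynomial.vars_pow _ _ h')
        · exact hyini (MvPolynomial.vars_pow _ _ h')
      have hφEq : Polynomial.C (T'.prodInit ^ k₂ * initialWrt e.1 e.2 ^ k₂) * toUni e.1 R
          = toUni e.1 E + toUni e.1 B * toUni e.1 e.2 := by
        have h4 := congrArg (toUni e.1) hEq2
        rwa [toUni_mul, toUni_C_of_not_mem_vars hyc, toUni_add, toUni_mul] at h4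
      have hB' : ∀ j, (toUni e.1 B).coeff j ∈ T'.sat := by
        apply polykey T'.sat (toUni e.1 e.2) (toUni e.1 B)
        · rw [natDegree_toUni]; exact hd
        · intro p hp
          exact hregE2 p (by rwa [leadingCoeff_toUni] at hp)
        · intro t ht
          rw [natDegree_toUni] at ht
          have h0 : (toUni e.1 R).coeff t = 0 := by
            apply Polynomial.coeff_eq_zero_of_natDegree_lt
            rw [natDegree_toUni]
            omega
          have hc := congrArg (fun p => Polynomial.coeff p t) hφEq
          simp only [Polynomial.coeff_add, Polynomial.coeff_C_mul] at hc
          rw [h0, mul_zero] at hc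
          have h5 : (toUni e.1 B * toUni e.1 e.2).coeff t = -(toUni e.1 E).coeff t := by
            linear_combination hc.symm
          rw [h5]
          exact neg_mem (ideal_le_sat T' (ideal_coeff_mem hyT' hE t))
      have hRco : ∀ t, (toUni e.1 R).coeff t ∈ T'.sat := by
        intro t
        rcases Nat.lt_or_ge t (e.2.degreeOf e.1) with hts | hts
        · have hc := congrArg (fun p => Polynomial.coeff p t) hφEq
          simp only [Polynomial.coeff_add, Polynomial.coeff_C_mul] at hc
          have hrhs : (toUni e.1 E).coeff t + (toUni e.1 B * toUni e.1 e.2).coeff t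
              ∈ T'.sat := by
            apply Ideal.add_mem
            · exact ideal_le_sat T' (ideal_coeff_mem hyT' hE t)
            · rw [Polynomial.coeff_mul]
              apply Ideal.sum_mem
              rintro ⟨i₁, i₂⟩ _
              exact Ideal.mul_mem_right _ _ (hB' i₁)
          rw [← hc] at hrhs
          apply reg_pow_cancel hregE2 (k := k₂)
          apply sat_saturated (T := T') (k := k₂)
          rwa [← mul_assoc]
        · have h0 : (toUni e.1 R).coeff t = 0 := by
            apply Polynomial.coeff_eq_zero_of_natDegree_lt
            rw [natDegree_toUni]
            omega
          rw [h0]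
          exact Ideal.zero_mem _
      have hRsat : R ∈ T'.sat := mem_ideal_of_coeffs T'.sat e.1 R hRco
      rw [hrev]
      exact ⟨R, ⟨A, hEq, hdegR⟩, (IH T' hT'len hT'reg R).mp hRsat⟩
    · -- easy direction
      intro hIter
      rw [hrev] at hIter
      obtain ⟨S, ⟨A, hEq, hdeg⟩, hIter'⟩ := hIter
      have hSsat : S ∈ T.sat :=
        sat_mono_split hsplit ((IH T' hT'len hT'reg S).mpr hIter')
      have h1 : initialWrt e.1 e.2 ^ (f.degreeOf e.1 + 1 - e.2.degreeOf e.1) * f ∈ T.sat := by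
        rw [hEq]
        exact Ideal.add_mem _
          (Ideal.mul_mem_left _ _ (ideal_le_sat T (gen_mem_ideal hemem))) hSsat
      exact ini_sat_cancel hsplit h1

theorem sat_iff_iterPrem (T : TriSet K σ) (hreg : T.Regular) (f : MvPolynomial σ K) :
    f ∈ T.sat ↔ IterPrem f T.elems.reverse 0 :=
  sat_iff_iterPrem_aux T.elems.length T rfl hreg f

end Main

end CharDec

open CharDec MvPolynomial

/-- Let `T` be a regular triangular set all of whose leading
variables are smaller than `x_m`, and let `P` have leading variable `x_m` and
coefficients `P_i = coeff of x_m^i` (which lie in `K[x_1,…,x_{m−1}]`). Then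
`prem(P, T) = 0` iff `prem(P_i, T) = 0` for all `i = 0, …, deg(P, x_m)`. -/
theorem stmt_8 {K : Type*} [Field K] {n : ℕ} (T : TriSet K (Fin n))
    (hreg : T.Regular) (m : Fin n) (hlt : ∀ e ∈ T.elems, e.1 < m)
    (P : MvPolynomial (Fin n) K) (hP : HasLV P m) :
    IterPrem P T.elems.reverse 0 ↔
      ∀ i ≤ P.degreeOf m, IterPrem (coeffWrt m i P) T.elems.reverse 0 := by
  have hvars : ∀ e ∈ T.elems, m ∉ e.2.vars := by
    intro e he hv
    exact absurd ((T.hlv e he).2 m hv) (not_le.mpr (hlt e he))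
  rw [← sat_iff_iterPrem T hreg P]
  constructor
  · intro hsat i hi
    rw [← sat_iff_iterPrem T hreg]
    have h1 := sat_coeff_mem hvars hsat i
    rwa [coeff_toUni] at h1
  · intro h
    apply mem_ideal_of_coeffs T.sat m
    intro j
    rcases le_or_gt j (P.degreeOf m) with hj | hj
    · have h1 := h j hj
      rw [← sat_iff_iterPrem T hreg] at h1
      rwa [coeff_toUni]
    · rw [coeff_toUni, coeffWrt_eq_zero_of_gt hj]
      exact Ideal.zero_mem _
end

section
/- Let C = [C_1,...,C_r] be a normal triangular set and C* = [C_1, prem(C_2,[C_1]), ..., prem(C_r,[C_1,...,C_{r−1}])]. Then Zero(C* / ini(C*)) = Zero(C / ini(C)), i.e., the zeros of C avoiding the zeros of the initials of C coincide with the zeros of C* avoiding the zeros of the initials of C*. -/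
open MvPolynomial

open CharDec MvPolynomial

section StmtAux
set_option linter.unusedSectionVars false

variable {K : Type*} [Field K] {σ : Type*} [LinearOrder σ]

lemma aux_upd_apply (m : σ →₀ ℕ) (i j : σ) (d : ℕ) :
    (m.update i d) j = if j = i then d else m j := by
  rw [Finsupp.coe_update]; exact Function.update_apply m i d j

lemma aux_upd_upd (m : σ →₀ ℕ) (i : σ) (a b : ℕ) :
    (m.update i a).update i b = m.update i b :=
  Finsupp.update_idem m i a b

lemma aux_upd_self (m : σ →₀ ℕ) (i : σ) : m.update i (m i) = m :=
  Finsupp.update_self m i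

lemma aux_upd_zero {m : σ →₀ ℕ} {i : σ} (h : m i = 0) : m.update i 0 = m := by
  rw [← h, aux_upd_self]

lemma aux_coeff_coeffWrt (i : σ) (d : ℕ) (f : MvPolynomial σ K) (m : σ →₀ ℕ) :
    coeff m (coeffWrt i d f) = if m i = 0 then coeff (m.update i d) f else 0 := by
  rw [coeffWrt, coeff_sum]
  by_cases hm : m i = 0
  · rw [if_pos hm, Finset.sum_eq_single (m.update i d)]
    · rw [coeff_monomial, if_pos]
      rw [aux_upd_upd, aux_upd_zero hm]
    · intro a ha hne
      rw [coeff_monomial, if_neg]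
      intro hEq
      apply hne
      have hai : a i = d := (Finset.mem_filter.mp ha).2
      calc a = (a.update i 0).update i d := by rw [aux_upd_upd, ← hai, aux_upd_self]
        _ = m.update i d := by rw [hEq]
    · intro hb
      rw [coeff_monomial, if_pos (by rw [aux_upd_upd, aux_upd_zero hm])]
      have : m.update i d ∉ f.support := by
        intro hmem
        exact hb (Finset.mem_filter.mpr ⟨hmem, by rw [aux_upd_apply, if_pos rfl]⟩)
      rwa [MvPolynomial.notMem_support_iff] at this
  · rw [if_neg hm]
    apply Finset.sum_eq_zero
    intro a _
    rw [coeff_monomial, if_neg]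
    intro h
    apply hm
    rw [← h, aux_upd_apply, if_pos rfl]

noncomputable def auxCw (i : σ) (d : ℕ) : MvPolynomial σ K →+ MvPolynomial σ K where
  toFun := coeffWrt i d
  map_zero' := by
    apply MvPolynomial.ext; intro m
    rw [aux_coeff_coeffWrt]; simp
  map_add' f g := by
    apply MvPolynomial.ext; intro m
    simp only [coeff_add, aux_coeff_coeffWrt]
    split <;> simp

lemma aux_coeffWrt_zero (i : σ) (d : ℕ) : coeffWrt i d (0 : MvPolynomial σ K) = 0 :=
  map_zero (auxCw i d)

lemma aux_coeffWrt_add (i : σ) (d : ℕ) (f g : MvPolynomial σ K) :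
    coeffWrt i d (f + g) = coeffWrt i d f + coeffWrt i d g :=
  map_add (auxCw i d) f g

lemma aux_coeffWrt_sum {ι : Type*} (s : Finset ι) (F : ι → MvPolynomial σ K) (i : σ) (d : ℕ) :
    coeffWrt i d (∑ j ∈ s, F j) = ∑ j ∈ s, coeffWrt i d (F j) :=
  map_sum (auxCw i d) F s

lemma aux_mem_support_coeffWrt {i : σ} {d : ℕ} {f : MvPolynomial σ K} {m : σ →₀ ℕ}
    (h : m ∈ (coeffWrt i d f).support) : m i = 0 ∧ m.update i d ∈ f.support := by
  rw [MvPolynomial.mem_support_iff, aux_coeff_coeffWrt] at h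
  by_cases hm : m i = 0
  · rw [if_pos hm] at h
    exact ⟨hm, MvPolynomial.mem_support_iff.mpr h⟩
  · rw [if_neg hm] at h
    exact absurd rfl h

lemma aux_le_degreeOf {f : MvPolynomial σ K} {m : σ →₀ ℕ} (h : m ∈ f.support) (i : σ) :
    m i ≤ degreeOf i f := by
  rw [degreeOf_eq_sup]
  exact Finset.le_sup (f := fun m => m i) h

lemma aux_degreeOf_eq_zero_iff {i : σ} {f : MvPolynomial σ K} :
    degreeOf i f = 0 ↔ ∀ m ∈ f.support, m i = 0 := by
  rw [degreeOf_eq_sup, ← Nat.le_zero, Finset.sup_le_iff]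
  simp [Nat.le_zero]

lemma aux_not_mem_vars_iff {i : σ} {f : MvPolynomial σ K} :
    i ∉ f.vars ↔ degreeOf i f = 0 := by
  rw [aux_degreeOf_eq_zero_iff]
  constructor
  · intro h m hm
    by_contra hne
    exact h ((mem_vars i).mpr ⟨m, hm, Finsupp.mem_support_iff.mpr hne⟩)
  · intro h hv
    obtain ⟨m, hm, him⟩ := (mem_vars i).mp hv
    exact Finsupp.mem_support_iff.mp him (h m hm)

lemma aux_coeffWrt_eq_zero {i : σ} {d : ℕ} {f : MvPolynomial σ K} (h : degreeOf i f < d) :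
    coeffWrt i d f = 0 := by
  apply MvPolynomial.ext; intro m
  rw [aux_coeff_coeffWrt, coeff_zero]
  split
  · by_contra hne
    have h2 := aux_le_degreeOf (MvPolynomial.mem_support_iff.mpr hne) i
    rw [aux_upd_apply, if_pos rfl] at h2
    omega
  · rfl

lemma aux_coeffWrt_degreeOf_ne_zero {i : σ} {f : MvPolynomial σ K} (hf : f ≠ 0) :
    coeffWrt i (degreeOf i f) f ≠ 0 := by
  obtain ⟨m, hm, hsup⟩ :=
    Finset.exists_mem_eq_sup f.support (MvPolynomial.support_nonempty.mpr hf) (fun m => m i)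
  have hD : degreeOf i f = m i := by rw [degreeOf_eq_sup]; exact hsup
  intro h0
  have h1 : coeff (m.update i 0) (coeffWrt i (degreeOf i f) f) = 0 := by rw [h0, coeff_zero]
  rw [aux_coeff_coeffWrt, if_pos (by rw [aux_upd_apply, if_pos rfl])] at h1
  rw [aux_upd_upd, hD, aux_upd_self] at h1
  exact MvPolynomial.mem_support_iff.mp hm h1

lemma aux_degreeOf_eq_of_coeffWrt {i : σ} {d : ℕ} {f : MvPolynomial σ K}
    (h1 : coeffWrt i d f ≠ 0) (h2 : ∀ e, d < e → coeffWrt i e f = 0) :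
    degreeOf i f = d := by
  have hf : f ≠ 0 := by
    rintro rfl
    exact h1 (aux_coeffWrt_zero i d)
  obtain ⟨m, hm⟩ := MvPolynomial.ne_zero_iff.mp h1
  rw [aux_coeff_coeffWrt] at hm
  have hmi : m i = 0 := by
    by_contra hc
    rw [if_neg hc] at hm
    exact hm rfl
  rw [if_pos hmi] at hm
  have hle : d ≤ degreeOf i f := by
    have h3 := aux_le_degreeOf (MvPolynomial.mem_support_iff.mpr hm) i
    rwa [aux_upd_apply, if_pos rfl] at h3
  rcases lt_or_eq_of_le hle with hlt | he
  · exact absurd (h2 _ hlt) (aux_coeffWrt_degreeOf_ne_zero hf)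
  · exact he.symm

lemma aux_degreeOf_coeffWrt_le {i j : σ} (hij : j ≠ i) (d : ℕ) (f : MvPolynomial σ K) :
    degreeOf j (coeffWrt i d f) ≤ degreeOf j f := by
  rw [degreeOf_le_iff]
  intro m hm
  obtain ⟨h1, h2⟩ := aux_mem_support_coeffWrt hm
  have h3 := aux_le_degreeOf h2 j
  rwa [aux_upd_apply, if_neg hij] at h3

lemma aux_degreeOf_coeffWrt_self (i : σ) (d : ℕ) (f : MvPolynomial σ K) :
    degreeOf i (coeffWrt i d f) = 0 := by
  rw [aux_degreeOf_eq_zero_iff]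
  exact fun m hm => (aux_mem_support_coeffWrt hm).1

lemma aux_vars_coeffWrt {i : σ} {d : ℕ} {f : MvPolynomial σ K} :
    (coeffWrt i d f).vars ⊆ f.vars := by
  intro j hj
  have hnz : degreeOf j (coeffWrt i d f) ≠ 0 := fun h => aux_not_mem_vars_iff.mpr h hj
  by_cases hij : j = i
  · subst hij
    exact absurd (aux_degreeOf_coeffWrt_self j d f) hnz
  · by_contra hjf
    have h0 : degreeOf j f = 0 := aux_not_mem_vars_iff.mp hjf
    have h1 := aux_degreeOf_coeffWrt_le hij d f
    omega

lemma aux_coeffWrt_monomial (i : σ) (d : ℕ) (u : σ →₀ ℕ) (c : K) :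
    coeffWrt i d (monomial u c) = if u i = d then monomial (u.update i 0) c else 0 := by
  apply MvPolynomial.ext; intro m
  rw [aux_coeff_coeffWrt]
  by_cases hm : m i = 0
  · rw [if_pos hm, coeff_monomial]
    by_cases hud : u i = d
    · rw [if_pos hud, coeff_monomial]
      have hiff : u = m.update i d ↔ u.update i 0 = m := by
        constructor
        · rintro rfl
          rw [aux_upd_upd, aux_upd_zero hm]
        · rintro rfl
          rw [aux_upd_upd, ← hud, aux_upd_self]
      rw [if_congr hiff rfl rfl]
    · rw [if_neg hud, coeff_zero, if_neg]
      intro hEq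
      apply hud
      rw [hEq, aux_upd_apply, if_pos rfl]
  · rw [if_neg hm]
    split
    · rw [coeff_monomial, if_neg]
      intro hEq
      apply hm
      rw [← hEq, aux_upd_apply, if_pos rfl]
    · rw [coeff_zero]

lemma aux_coeffWrt_mul (i : σ) (d : ℕ) (f g : MvPolynomial σ K) (hg : degreeOf i g = 0) :
    coeffWrt i d (f * g) = coeffWrt i d f * g := by
  have hb0 : ∀ b ∈ g.support, b i = 0 := aux_degreeOf_eq_zero_iff.mp hg
  have key : ∀ (a : σ →₀ ℕ) (ca : K) (b : σ →₀ ℕ), b i = 0 → ∀ cb : K,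
      coeffWrt i d (monomial a ca * monomial b cb) =
        coeffWrt i d (monomial a ca) * monomial b cb := by
    intro a ca b hb cb
    rw [monomial_mul, aux_coeffWrt_monomial, aux_coeffWrt_monomial]
    have h1 : (a + b) i = a i := by rw [Finsupp.add_apply, hb, add_zero]
    have h2 : (a + b).update i 0 = a.update i 0 + b := by
      ext j
      by_cases hj : j = i
      · subst hj
        simp [Finsupp.add_apply, aux_upd_apply, hb]
      · simp [Finsupp.add_apply, aux_upd_apply, hj]
    rw [h1, h2]
    by_cases had : a i = d
    · rw [if_pos had, if_pos had, monomial_mul]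
    · rw [if_neg had, if_neg had, zero_mul]
  rw [show f * g = ∑ a ∈ f.support, ∑ b ∈ g.support,
        monomial a (coeff a f) * monomial b (coeff b g) by
      rw [← Finset.sum_mul_sum, ← f.as_sum, ← g.as_sum]]
  rw [show coeffWrt i d f * g = ∑ a ∈ f.support, ∑ b ∈ g.support,
        coeffWrt i d (monomial a (coeff a f)) * monomial b (coeff b g) by
      rw [← Finset.sum_mul_sum, ← aux_coeffWrt_sum, ← f.as_sum, ← g.as_sum]]
  rw [aux_coeffWrt_sum]
  apply Finset.sum_congr rfl
  intro a _
  rw [aux_coeffWrt_sum]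
  exact Finset.sum_congr rfl fun b hb => key a _ b (hb0 b hb) _

lemma aux_degreeOf_mul_eq {n : ℕ} (y : Fin n) (B Q : MvPolynomial (Fin n) K)
    (hB : B ≠ 0) (hQ : Q ≠ 0) :
    degreeOf y (B * Q) = degreeOf y B + degreeOf y Q := by
  cases n with
  | zero => exact y.elim0
  | succ m =>
    set e := Equiv.swap y 0 with he
    have hy : e y = 0 := Equiv.swap_apply_left y 0
    have hren : ∀ f : MvPolynomial (Fin (m + 1)) K,
        degreeOf y f = (MvPolynomial.finSuccEquiv K m (rename (⇑e) f)).natDegree := by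
      intro f
      rw [MvPolynomial.natDegree_finSuccEquiv, ← hy,
        MvPolynomial.degreeOf_rename_of_injective e.injective]
    have hB' : rename (⇑e) B ≠ 0 :=
      fun h => hB (MvPolynomial.rename_injective _ e.injective (h.trans (map_zero _).symm))
    have hQ' : rename (⇑e) Q ≠ 0 :=
      fun h => hQ (MvPolynomial.rename_injective _ e.injective (h.trans (map_zero _).symm))
    have hB'' : MvPolynomial.finSuccEquiv K m (rename (⇑e) B) ≠ 0 :=
      fun h => hB' ((MvPolynomial.finSuccEquiv K m).injective (h.trans (map_zero _).symm))
    have hQ'' : MvPolynomial.finSuccEquiv K m (rename (⇑e) Q) ≠ 0 :=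
      fun h => hQ' ((MvPolynomial.finSuccEquiv K m).injective (h.trans (map_zero _).symm))
    rw [hren, hren, hren, map_mul, map_mul]
    exact Polynomial.natDegree_mul hB'' hQ''

lemma aux_initialWrt_ne_zero {i : σ} {f : MvPolynomial σ K} (hf : f ≠ 0) :
    initialWrt i f ≠ 0 :=
  aux_coeffWrt_degreeOf_ne_zero hf

lemma aux_degreeOf_initialWrt_self (i : σ) (f : MvPolynomial σ K) :
    degreeOf i (initialWrt i f) = 0 :=
  aux_degreeOf_coeffWrt_self i _ f

lemma aux_vars_initialWrt {i : σ} {f : MvPolynomial σ K} :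
    (initialWrt i f).vars ⊆ f.vars :=
  aux_vars_coeffWrt

end StmtAux

section StmtMain
set_option linter.unusedSectionVars false
set_option maxHeartbeats 1000000

variable {K : Type*} [Field K]

lemma aux_prem_step {n : ℕ} {y z : Fin n} (hyz : y ≠ z) {Q P R : MvPolynomial (Fin n) K}
    (hQz : degreeOf z Q = 0) (hQy : 0 < degreeOf y Q)
    (hPy : degreeOf y (initialWrt z P) = 0) (hP : P ≠ 0)
    (hpr : IsPrem y Q P R) :
    R ≠ 0 ∧ degreeOf z R = degreeOf z P ∧
      initialWrt z R =
        (initialWrt y Q) ^ (P.degreeOf y + 1 - Q.degreeOf y) * initialWrt z P := by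
  obtain ⟨A, heq, hRd⟩ := hpr
  have hQ0 : Q ≠ 0 := by
    rintro rfl
    rw [degreeOf_zero] at hQy
    omega
  set q := P.degreeOf y + 1 - Q.degreeOf y with hq
  set I := initialWrt y Q with hI
  have hIne : I ≠ 0 := aux_initialWrt_ne_zero hQ0
  have hvarsI : (I ^ q).vars ⊆ Q.vars := fun j hj => aux_vars_initialWrt (vars_pow _ _ hj)
  have hIz : degreeOf z (I ^ q) = 0 :=
    aux_not_mem_vars_iff.mp (fun hzv => aux_not_mem_vars_iff.mpr hQz (hvarsI hzv))
  have hIy : degreeOf y (I ^ q) = 0 :=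
    aux_not_mem_vars_iff.mp
      (fun hyv => aux_not_mem_vars_iff.mpr (aux_degreeOf_initialWrt_self y Q) (vars_pow _ _ hyv))
  have key : ∀ d : ℕ, coeffWrt z d A * Q + coeffWrt z d R = I ^ q * coeffWrt z d P := by
    intro d
    have h1 : coeffWrt z d (I ^ q * P) = I ^ q * coeffWrt z d P := by
      rw [mul_comm, aux_coeffWrt_mul _ _ _ _ hIz, mul_comm]
    rw [heq, aux_coeffWrt_add, aux_coeffWrt_mul _ _ _ _ hQz] at h1
    exact h1
  set D := degreeOf z P with hD
  have cancel : ∀ B E : MvPolynomial (Fin n) K,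
      B * Q = E → degreeOf y E < degreeOf y Q → B * Q = 0 := by
    intro B E hBE hE
    by_cases hB : B = 0
    · rw [hB, zero_mul]
    · exfalso
      have h2 := aux_degreeOf_mul_eq y B Q hB hQ0
      rw [hBE] at h2
      omega
  have hhigh : ∀ d, D < d → coeffWrt z d R = 0 := by
    intro d hd
    have hk := key d
    rw [aux_coeffWrt_eq_zero (show degreeOf z P < d from hd), mul_zero] at hk
    have hBE : coeffWrt z d A * Q = -coeffWrt z d R := eq_neg_of_add_eq_zero_left hk
    have h0 := cancel _ _ hBE (by
      rw [degreeOf_neg]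
      calc degreeOf y (coeffWrt z d R) ≤ degreeOf y R := aux_degreeOf_coeffWrt_le hyz d R
        _ < degreeOf y Q := hRd)
    rw [h0] at hBE
    exact neg_eq_zero.mp hBE.symm
  have hDR : coeffWrt z D R = I ^ q * initialWrt z P := by
    have hk := key D
    have hip : initialWrt z P = coeffWrt z D P := rfl
    have hBE : coeffWrt z D A * Q = I ^ q * initialWrt z P - coeffWrt z D R := by
      rw [hip]
      exact eq_sub_of_add_eq hk
    have hdeg : degreeOf y (I ^ q * initialWrt z P - coeffWrt z D R) < degreeOf y Q := by
      apply lt_of_le_of_lt (degreeOf_sub_le _ _ _)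
      apply max_lt
      · apply lt_of_le_of_lt (degreeOf_mul_le _ _ _)
        rw [hIy, hPy]
        omega
      · calc degreeOf y (coeffWrt z D R) ≤ degreeOf y R := aux_degreeOf_coeffWrt_le hyz D R
          _ < degreeOf y Q := hRd
    have h0 := cancel _ _ hBE hdeg
    rw [h0] at hBE
    exact (sub_eq_zero.mp hBE.symm).symm
  have hne : I ^ q * initialWrt z P ≠ 0 :=
    mul_ne_zero (pow_ne_zero _ hIne) (aux_initialWrt_ne_zero hP)
  have hdegR : degreeOf z R = D :=
    aux_degreeOf_eq_of_coeffWrt (by rw [hDR]; exact hne) hhigh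
  refine ⟨?_, hdegR, ?_⟩
  · intro h0
    rw [h0, aux_coeffWrt_zero] at hDR
    exact hne hDR.symm
  · show coeffWrt z (degreeOf z R) R = _
    rw [hdegR]
    exact hDR

lemma aux_iter_lemma {n : ℕ} (z : Fin n) (Par : Set (Fin n)) :
    ∀ L : List (Fin n × MvPolynomial (Fin n) K),
      (∀ e ∈ L, HasLV e.2 e.1 ∧ e.1 < z ∧ e.1 ∉ Par ∧
        (∀ j ∈ (initialWrt e.1 e.2).vars, j ∈ Par)) →
      ∀ P R : MvPolynomial (Fin n) K, P ≠ 0 →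
        (∀ j ∈ (initialWrt z P).vars, j ∈ Par) →
        IterPrem P L R →
        ∃ c : MvPolynomial (Fin n) K, c ≠ 0 ∧
          initialWrt z R = c * initialWrt z P ∧
          (∀ x : Fin n → AlgebraicClosure K,
            (∀ e ∈ L, aeval x (initialWrt e.1 e.2) ≠ 0) → aeval x c ≠ 0) ∧
          (∀ x : Fin n → AlgebraicClosure K,
            (∀ e ∈ L, aeval x e.2 = 0) → aeval x R = aeval x c * aeval x P) := by
  intro L
  induction L with
  | nil =>
    intro _ P R hP hPv hIt
    obtain rfl : R = P := hIt
    exact ⟨1, one_ne_zero, (one_mul _).symm, fun x _ => by simp, fun x _ => by simp⟩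
  | cons e L ih =>
    intro hL P R hP hPv hIt
    obtain ⟨S, hpr, hit⟩ := hIt
    obtain ⟨hlv, hez, hePar, heV⟩ := hL e (List.mem_cons_self)
    have hyz : e.1 ≠ z := ne_of_lt hez
    have hQ0 : e.2 ≠ 0 := by
      intro h0
      have h1 := hlv.1
      rw [h0, vars_0] at h1
      exact absurd h1 (Finset.notMem_empty _)
    have hQz : degreeOf z e.2 = 0 :=
      aux_not_mem_vars_iff.mp (fun hzv => absurd (hlv.2 z hzv) (not_le.mpr hez))
    have hQy : 0 < degreeOf e.1 e.2 :=
      Nat.pos_of_ne_zero (fun h0 => aux_not_mem_vars_iff.mpr h0 hlv.1)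
    have hPy : degreeOf e.1 (initialWrt z P) = 0 :=
      aux_not_mem_vars_iff.mp (fun hyv => hePar (hPv _ hyv))
    obtain ⟨hSne, hSdeg, hSini⟩ := aux_prem_step hyz hQz hQy hPy hP hpr
    have hSv : ∀ j ∈ (initialWrt z S).vars, j ∈ Par := by
      intro j hj
      rw [hSini] at hj
      rcases Finset.mem_union.mp (vars_mul _ _ hj) with hj1 | hj2
      · exact heV j (vars_pow _ _ hj1)
      · exact hPv j hj2
    obtain ⟨c, hc0, hcini, hcnz, hcval⟩ :=
      ih (fun e' he' => hL e' (List.mem_cons_of_mem _ he')) S R hSne hSv hit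
    refine ⟨c * (initialWrt e.1 e.2) ^ (P.degreeOf e.1 + 1 - e.2.degreeOf e.1),
      mul_ne_zero hc0 (pow_ne_zero _ (aux_initialWrt_ne_zero hQ0)), ?_, ?_, ?_⟩
    · rw [hcini, hSini]; ring
    · intro x hx
      have h1 := hcnz x (fun e' he' => hx e' (List.mem_cons_of_mem _ he'))
      have h2 : aeval x (initialWrt e.1 e.2) ≠ 0 := hx e (List.mem_cons_self)
      rw [map_mul, map_pow]
      exact mul_ne_zero h1 (pow_ne_zero _ h2)
    · intro x hx
      obtain ⟨A, heq, -⟩ := hpr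
      have hQx : aeval x e.2 = 0 := hx e (List.mem_cons_self)
      have hSval : aeval x S =
          aeval x (initialWrt e.1 e.2) ^ (P.degreeOf e.1 + 1 - e.2.degreeOf e.1) * aeval x P := by
        have h3 := congrArg (aeval x) heq
        rw [map_mul, map_pow, map_add, map_mul, hQx, mul_zero, zero_add] at h3
        exact h3.symm
      rw [hcval x (fun e' he' => hx e' (List.mem_cons_of_mem _ he')), hSval, map_mul, map_pow]
      ring

end StmtMain




/-- Let `C = [C_1,…,C_r]` be a normal triangular set (with
its parameters ordered before its leading variables) and
`C* = [C_1, prem(C_2,[C_1]), …, prem(C_r,[C_1,…,C_{r−1}])]`. Then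
`Zero(C*/ini(C*)) = Zero(C/ini(C))`. -/
theorem stmt_10 {K : Type*} [Field K] {n : ℕ} (C : TriSet K (Fin n))
    (hnormal : C.Normal)
    (hord : ∀ j : Fin n, C.IsParam j → ∀ e ∈ C.elems, j < e.1)
    (Cs : List (MvPolynomial (Fin n) K)) (hlen : Cs.length = C.elems.length)
    (hprem : ∀ i : ℕ, ∀ h : i < C.elems.length,
      IterPrem (C.elems.get ⟨i, h⟩).2 ((C.elems.take i).reverse)
        (Cs.get ⟨i, by omega⟩)) :
    {x : Fin n → AlgebraicClosure K |
      ∀ i : ℕ, ∀ h : i < C.elems.length,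
        aeval x (Cs.get ⟨i, by omega⟩) = 0 ∧
        aeval x (initialWrt (C.elems.get ⟨i, h⟩).1 (Cs.get ⟨i, by omega⟩)) ≠ 0} =
      C.zeroQuasi := by
  classical
  have hmemtake : ∀ (i : ℕ) (h : i < C.elems.length), ∀ e ∈ C.elems.take i,
      e ∈ C.elems ∧ e.1 < (C.elems.get ⟨i, h⟩).1 := by
    intro i h e he
    refine ⟨List.mem_of_mem_take he, ?_⟩
    rw [List.mem_take_iff_getElem] at he
    obtain ⟨j, hj, rfl⟩ := he
    have hp := List.pairwise_iff_getElem.mp C.sorted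
    exact hp j i (by omega) h (by omega)
  have key : ∀ (i : ℕ) (h : i < C.elems.length),
      ∃ c : MvPolynomial (Fin n) K, c ≠ 0 ∧
        initialWrt (C.elems.get ⟨i, h⟩).1 (Cs.get ⟨i, by omega⟩) =
          c * initialWrt (C.elems.get ⟨i, h⟩).1 (C.elems.get ⟨i, h⟩).2 ∧
        (∀ x : Fin n → AlgebraicClosure K,
          (∀ e ∈ C.elems.take i, aeval x (initialWrt e.1 e.2) ≠ 0) → aeval x c ≠ 0) ∧
        (∀ x : Fin n → AlgebraicClosure K,
          (∀ e ∈ C.elems.take i, aeval x e.2 = 0) →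
            aeval x (Cs.get ⟨i, by omega⟩) = aeval x c * aeval x (C.elems.get ⟨i, h⟩).2) := by
    intro i h
    have hPmem : C.elems.get ⟨i, h⟩ ∈ C.elems := C.elems.get_mem ⟨i, h⟩
    have hlvP := C.hlv _ hPmem
    have hP : (C.elems.get ⟨i, h⟩).2 ≠ 0 := by
      intro h0
      have h1 := hlvP.1
      rw [h0, vars_0] at h1
      exact absurd h1 (Finset.notMem_empty _)
    obtain ⟨c, hc0, hcini, hcnz, hcval⟩ :=
      aux_iter_lemma (C.elems.get ⟨i, h⟩).1 {j : Fin n | C.IsParam j}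
        ((C.elems.take i).reverse)
        (fun e he => by
          have hmem := List.mem_reverse.mp he
          obtain ⟨h1, h2⟩ := hmemtake i h e hmem
          refine ⟨C.hlv e h1, h2, ?_, hnormal e h1⟩
          intro hpar
          exact hpar (List.mem_map_of_mem (f := Prod.fst) h1))
        _ _ hP (hnormal _ hPmem) (hprem i h)
    exact ⟨c, hc0, hcini,
      fun x hx => hcnz x (fun e he => hx e (List.mem_reverse.mp he)),
      fun x hx => hcval x (fun e he => hx e (List.mem_reverse.mp he))⟩
  ext x
  simp only [Set.mem_setOf_eq, TriSet.zeroQuasi]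
  constructor
  · intro hx
    have main : ∀ i, ∀ h : i < C.elems.length,
        aeval x (C.elems.get ⟨i, h⟩).2 = 0 ∧
          aeval x (initialWrt (C.elems.get ⟨i, h⟩).1 (C.elems.get ⟨i, h⟩).2) ≠ 0 := by
      intro i
      induction i using Nat.strong_induction_on with
      | _ i ih =>
        intro h
        obtain ⟨c, hc0, hcini, hcnz, hcval⟩ := key i h
        have hz : ∀ e ∈ C.elems.take i, aeval x e.2 = 0 := by
          intro e he
          rw [List.mem_take_iff_getElem] at he
          obtain ⟨j, hj, rfl⟩ := he
          exact (ih j (by omega) (by omega)).1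
        have hnz : ∀ e ∈ C.elems.take i, aeval x (initialWrt e.1 e.2) ≠ 0 := by
          intro e he
          rw [List.mem_take_iff_getElem] at he
          obtain ⟨j, hj, rfl⟩ := he
          exact (ih j (by omega) (by omega)).2
        obtain ⟨h1, h2⟩ := hx i h
        have hcx := hcnz x hnz
        constructor
        · have h3 := hcval x hz
          rw [h1] at h3
          rcases mul_eq_zero.mp h3.symm with h4 | h4
          · exact absurd h4 hcx
          · exact h4
        · intro h0
          apply h2
          rw [hcini, map_mul, h0, mul_zero]
    constructor
    · intro e he
      obtain ⟨⟨j, hj⟩, rfl⟩ := List.mem_iff_get.mp he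
      exact (main j hj).1
    · intro e he
      obtain ⟨⟨j, hj⟩, rfl⟩ := List.mem_iff_get.mp he
      exact (main j hj).2
  · intro hx
    obtain ⟨hx1, hx2⟩ := hx
    intro i h
    obtain ⟨c, hc0, hcini, hcnz, hcval⟩ := key i h
    have hPmem : C.elems.get ⟨i, h⟩ ∈ C.elems := C.elems.get_mem ⟨i, h⟩
    constructor
    · rw [hcval x (fun e he => hx1 e (List.mem_of_mem_take he)), hx1 _ hPmem, mul_zero]
    · rw [hcini, map_mul]
      exact mul_ne_zero (hcnz x (fun e he => hx2 e (List.mem_of_mem_take he))) (hx2 _ hPmem)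
end
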